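/- Let n ≥ 1, let A ⊆ B ⊆ ℝ^n be finite sets, assume the vectors of A are linearly independent, and let R₂ ≥ 0 be an even integer. Then 1_{{A = B}} ≤ Σ_{r=0}^{R₂} (−1)^r τ_r(A, B). -/

import Mathlib

noncomputable section

/-- A finite set `Y` of vectors of `ℝⁿ` consists of linearly independent vectors. -/
def indepFinset {n : ℕ} (Y : Finset (Fin n → ℝ)) : Prop :=
  LinearIndependent ℝ (fun x : (Y : Set (Fin n → ℝ)) => (x : Fin n → ℝ))

/-- `rank X`: the dimension of the linear span of a finite set `X` of vectors of `ℝⁿ`. -/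
def rankOf {n : ℕ} (X : Finset (Fin n → ℝ)) : ℕ :=
  Module.finrank ℝ ↥(Submodule.span ℝ (X : Set (Fin n → ℝ)))

/-- The rank deficiency `δ(X) = |X| - rank X` of a finite set `X` of vectors of `ℝⁿ`. -/
def rankDef {n : ℕ} (X : Finset (Fin n → ℝ)) : ℕ :=
  X.card - rankOf X

/-- `τ_r(A, B)`: the number of subsets `Z ⊆ B \ A` with `|Z| = r` such that
`δ(A ∪ Z) ≤ 1` if `r` is even, and `δ(A ∪ Z) = 0` if `r` is odd. -/
def tauCount {n : ℕ} (r : ℕ) (A B : Finset (Fin n → ℝ)) : ℕ :=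
  (((B \ A).powersetCard r).filter fun Z =>
    rankDef (A ∪ Z) ≤ if Even r then 1 else 0).card

lemma rankOf_le_card {n : ℕ} (X : Finset (Fin n → ℝ)) : rankOf X ≤ X.card :=
  finrank_span_finset_le_card X

lemma rankOf_mono {n : ℕ} {X Y : Finset (Fin n → ℝ)} (h : X ⊆ Y) : rankOf X ≤ rankOf Y :=
  Submodule.finrank_mono (Submodule.span_mono (by exact_mod_cast h))

lemma rankOf_insert_le {n : ℕ} (a : Fin n → ℝ) (X : Finset (Fin n → ℝ)) :
    rankOf (insert a X) ≤ rankOf X + 1 := by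
  unfold rankOf
  rw [Finset.coe_insert, Submodule.span_insert]
  refine le_trans (Submodule.finrank_add_le_finrank_add_finrank _ _) ?_
  rw [add_comm]
  gcongr
  by_cases h : a = 0
  · subst h
    rw [Submodule.span_zero_singleton]
    simp
  · rw [finrank_span_singleton h]

lemma rankDef_le_iff {n : ℕ} (X : Finset (Fin n → ℝ)) (k : ℕ) :
    rankDef X ≤ k ↔ X.card ≤ rankOf X + k := by
  unfold rankDef
  omega

theorem sieve_tau_upper
    (n : ℕ) (hn : 1 ≤ n)
    (A B : Finset (Fin n → ℝ)) (hAB : A ⊆ B) (hA : indepFinset A)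
    (R₂ : ℕ) (hR₂ : Even R₂) :
    (if A = B then (1 : ℝ) else 0)
      ≤ ∑ r ∈ Finset.range (R₂ + 1), (-1 : ℝ) ^ r * (tauCount r A B : ℝ) := by
  classical
  have hrankA : rankOf A = A.card := finrank_span_finset_eq_card hA
  by_cases h : A = B
  · subst h
    rw [if_pos rfl]
    have hτ0 : tauCount 0 A A = 1 := by
      simp [tauCount, Finset.filter_singleton, rankDef, hrankA]
    have hsum : ∀ r ∈ Finset.range (R₂ + 1), r ≠ 0 →
        (-1 : ℝ) ^ r * (tauCount r A A : ℝ) = 0 := by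
      intro r _ hr
      have : tauCount r A A = 0 := by
        have : Finset.powersetCard r (∅ : Finset (Fin n → ℝ)) = ∅ := by
          rw [Finset.powersetCard_eq_empty]
          simpa using Nat.pos_of_ne_zero hr
        simp [tauCount, Finset.sdiff_self, this]
      simp [this]
    rw [Finset.sum_eq_single 0 hsum (by simp)]
    simp [hτ0]
  · rw [if_neg h]
    have hC : (B \ A).Nonempty := by
      rw [Finset.sdiff_nonempty]
      intro hBA
      exact h (Finset.Subset.antisymm hAB hBA)
    obtain ⟨c, hc⟩ := hC
    have hcA : c ∉ A := (Finset.mem_sdiff.mp hc).2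
    set C := B \ A with hCdef
    set G : Finset (Finset (Fin n → ℝ)) :=
      C.powerset.filter (fun Z => Z.card ≤ R₂ ∧
        rankDef (A ∪ Z) ≤ if Even Z.card then 1 else 0) with hG
    -- Step 1: rewrite the sum as a single sum over G
    have step1 : ∑ r ∈ Finset.range (R₂ + 1), (-1 : ℝ) ^ r * (tauCount r A B : ℝ)
        = ∑ Z ∈ G, (-1 : ℝ) ^ Z.card := by
      rw [← Finset.sum_fiberwise_of_maps_to (g := Finset.card) (t := Finset.range (R₂ + 1))
        (fun Z hZ => by
          rw [hG, Finset.mem_filter] at hZ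
          exact Finset.mem_range.mpr (Nat.lt_succ_of_le hZ.2.1))]
      refine Finset.sum_congr rfl (fun r hr => ?_)
      have hr' : r ≤ R₂ := Nat.lt_succ_iff.mp (Finset.mem_range.mp hr)
      have hset : G.filter (fun Z => Z.card = r)
          = (C.powersetCard r).filter (fun Z =>
              rankDef (A ∪ Z) ≤ if Even r then 1 else 0) := by
        ext Z
        simp only [hG, Finset.mem_filter, Finset.mem_powerset, Finset.mem_powersetCard]
        constructor
        · rintro ⟨⟨hZC, _, hd⟩, hcard⟩
          subst hcard
          exact ⟨⟨hZC, rfl⟩, hd⟩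
        · rintro ⟨⟨hZC, hcard⟩, hd⟩
          subst hcard
          exact ⟨⟨hZC, hr', hd⟩, rfl⟩
      symm
      calc ∑ Z ∈ G.filter (fun Z => Z.card = r), (-1 : ℝ) ^ Z.card
          = ∑ _Z ∈ G.filter (fun Z => Z.card = r), (-1 : ℝ) ^ r :=
            Finset.sum_congr rfl (fun Z hZ => by rw [(Finset.mem_filter.mp hZ).2])
        _ = ((G.filter (fun Z => Z.card = r)).card : ℝ) * (-1 : ℝ) ^ r := by
            rw [Finset.sum_const, nsmul_eq_mul]
        _ = (-1 : ℝ) ^ r * (tauCount r A B : ℝ) := by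
            rw [hset]
            simp only [tauCount, ← hCdef]
            ring
    rw [step1]
    -- Step 2: split by parity
    rw [← Finset.sum_filter_add_sum_filter_not G (fun Z => Even Z.card)]
    have he : ∑ Z ∈ G.filter (fun Z => Even Z.card), (-1 : ℝ) ^ Z.card
        = ((G.filter (fun Z => Even Z.card)).card : ℝ) := by
      rw [Finset.sum_congr rfl
        (fun Z hZ => (Finset.mem_filter.mp hZ).2.neg_one_pow)]
      simp
    have ho : ∑ Z ∈ G.filter (fun Z => ¬ Even Z.card), (-1 : ℝ) ^ Z.card
        = -((G.filter (fun Z => ¬ Even Z.card)).card : ℝ) := by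
      rw [Finset.sum_congr rfl
        (fun Z hZ => (Nat.not_even_iff_odd.mp (Finset.mem_filter.mp hZ).2).neg_one_pow)]
      simp
    rw [he, ho]
    -- Step 3: the injection Z ↦ Z Δ {c} from odd to even good sets
    have hinj : (G.filter (fun Z => ¬ Even Z.card)).card
        ≤ (G.filter (fun Z => Even Z.card)).card := by
      apply Finset.card_le_card_of_injOn (fun Z => if c ∈ Z then Z.erase c else insert c Z)
      · intro Z hZ
        obtain ⟨hZG, hodd⟩ := Finset.mem_filter.mp hZ
        rw [hG, Finset.mem_filter, Finset.mem_powerset] at hZG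
        have hZC := hZG.1
        have hZR := hZG.2.1
        have hZd := hZG.2.2
        rw [if_neg hodd] at hZd
        have h0 : (A ∪ Z).card ≤ rankOf (A ∪ Z) := by
          have := (rankDef_le_iff _ 0).mp hZd; omega
        obtain ⟨k, hk⟩ := Nat.not_even_iff_odd.mp hodd
        rw [Finset.mem_coe, hG, Finset.mem_filter, Finset.mem_filter, Finset.mem_powerset]
        beta_reduce
        by_cases hcZ : c ∈ Z
        · rw [if_pos hcZ]
          have hcardW : (Z.erase c).card + 1 = Z.card := Finset.card_erase_add_one hcZ
          have hkey : A ∪ Z = insert c (A ∪ Z.erase c) := by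
            ext x
            by_cases hx : x = c <;> simp [hx, hcZ, Finset.mem_erase]
          have hcW : c ∉ A ∪ Z.erase c := by simp [hcA]
          have hcards : (A ∪ Z).card = (A ∪ Z.erase c).card + 1 := by
            rw [hkey, Finset.card_insert_of_notMem hcW]
          have hrk : rankOf (A ∪ Z) ≤ rankOf (A ∪ Z.erase c) + 1 := by
            rw [hkey]; exact rankOf_insert_le _ _
          have heven : Even (Z.erase c).card := ⟨k, by omega⟩
          refine ⟨⟨(Finset.erase_subset _ _).trans hZC, by omega, ?_⟩, heven⟩
          rw [if_pos heven, rankDef_le_iff]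
          omega
        · rw [if_neg hcZ]
          have hcardW : (insert c Z).card = Z.card + 1 :=
            Finset.card_insert_of_notMem hcZ
          have hkey : A ∪ insert c Z = insert c (A ∪ Z) := Finset.union_insert _ _ _
          have hcW : c ∉ A ∪ Z := by simp [hcA, hcZ]
          have hcards : (A ∪ insert c Z).card = (A ∪ Z).card + 1 := by
            rw [hkey, Finset.card_insert_of_notMem hcW]
          have hrk : rankOf (A ∪ Z) ≤ rankOf (A ∪ insert c Z) :=
            rankOf_mono (by rw [hkey]; exact Finset.subset_insert _ _)
          have heven : Even (insert c Z).card := ⟨k + 1, by omega⟩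
          obtain ⟨m, hm⟩ := hR₂
          refine ⟨⟨Finset.insert_subset hc hZC, by omega, ?_⟩, heven⟩
          rw [if_pos heven, rankDef_le_iff]
          omega
      · intro Z₁ h₁ Z₂ h₂ heq
        have hii : ∀ Z : Finset (Fin n → ℝ),
            (if c ∈ (if c ∈ Z then Z.erase c else insert c Z)
              then (if c ∈ Z then Z.erase c else insert c Z).erase c
              else insert c (if c ∈ Z then Z.erase c else insert c Z)) = Z := by
          intro Z
          by_cases hx : c ∈ Z
          · rw [if_pos hx, if_neg (Finset.notMem_erase c Z), Finset.insert_erase hx]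
          · rw [if_neg hx, if_pos (Finset.mem_insert_self c Z), Finset.erase_insert hx]
        have := congrArg (fun W => if c ∈ W then W.erase c else insert c W) heq
        simpa only [hii] using this
    have hcast : ((G.filter (fun Z => ¬ Even Z.card)).card : ℝ)
        ≤ ((G.filter (fun Z => Even Z.card)).card : ℝ) := by exact_mod_cast hinj
    linarith
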